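/- Let γ > 0, and let U be a random variable with 0 ≤ U ≤ 1 almost surely such that either γ ≥ 1, or P(U = 1) ≥ 1 − γ. Set β_j = E[U^j] for j = 1, 2, 3. Then (β₂ − (1 − γ))(β₂ − β₁²) + (β₁ − (1 − γ))(β₂ − β₁² − β₃ + β₁β₂) ≥ 0. -/

import Mathlib

open MeasureTheory

lemma stmt13_lemK2 (u v : ℝ) (hu0 : 0 ≤ u) (hu1 : u ≤ 1) (hv0 : 0 ≤ v) (hv1 : v ≤ 1) :
    0 ≤ (u - v) ^ 2 * (1 - u * v) :=
  mul_nonneg (sq_nonneg _) (by nlinarith)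

lemma stmt13_lemG0 (u v w : ℝ) (h1 : w ≤ v) (h2 : v ≤ u) (hu1 : u ≤ 1)
    (hv0 : 0 ≤ v) (hw0 : 0 ≤ w) (hw1 : w ≤ 1) :
    0 ≤ (u - v) ^ 2 * (w - u * v) + (v - w) ^ 2 * (u - v * w) + (w - u) ^ 2 * (v - u * w) := by
  have t1 : 0 ≤ (u - v) ^ 2 * v * (1 - u) :=
    mul_nonneg (mul_nonneg (sq_nonneg _) hv0) (by linarith)
  have t2 : 0 ≤ (u - v) * (v - w) ^ 2 := mul_nonneg (by linarith) (sq_nonneg _)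
  have t3 : 0 ≤ (v - w) ^ 2 * v * (1 - w) :=
    mul_nonneg (mul_nonneg (sq_nonneg _) hv0) (by linarith)
  have t4 : 0 ≤ (v - w) ^ 3 := pow_nonneg (by linarith) 3
  have t5 : 0 ≤ (u - w) ^ 2 * w * (1 - u) :=
    mul_nonneg (mul_nonneg (sq_nonneg _) hw0) (by linarith)
  nlinarith [t1, t2, t3, t4, t5]

lemma stmt13_lemG (u v w : ℝ) (hu0 : 0 ≤ u) (hu1 : u ≤ 1) (hv0 : 0 ≤ v) (hv1 : v ≤ 1)
    (hw0 : 0 ≤ w) (hw1 : w ≤ 1) :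
    0 ≤ (u - v) ^ 2 * (w - u * v) + (v - w) ^ 2 * (u - v * w) + (w - u) ^ 2 * (v - u * w) := by
  rcases le_total u v with h1 | h1 <;> rcases le_total v w with h2 | h2 <;>
    rcases le_total u w with h3 | h3
  · nlinarith [stmt13_lemG0 w v u h1 h2 hw1 hv0 hu0 hu1]
  · nlinarith [stmt13_lemG0 w v u h1 h2 hw1 hv0 hu0 hu1]
  · nlinarith [stmt13_lemG0 v w u h3 h2 hv1 hw0 hu0 hu1]
  · nlinarith [stmt13_lemG0 v u w h3 h1 hv1 hu0 hw0 hw1]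
  · nlinarith [stmt13_lemG0 w u v h1 h3 hw1 hu0 hv0 hv1]
  · nlinarith [stmt13_lemG0 u w v h2 h3 hu1 hw0 hv0 hv1]
  · nlinarith [stmt13_lemG0 u v w h2 h1 hu1 hv0 hw0 hw1]
  · nlinarith [stmt13_lemG0 u v w h2 h1 hu1 hv0 hw0 hw1]

lemma stmt13_lemT (cx wx cy wy cz wz : ℝ)
    (hx : (cx = 1 ∧ 0 ≤ wx ∧ wx ≤ 1) ∨ (cx = 0 ∧ wx = 0))
    (hy : (cy = 1 ∧ 0 ≤ wy ∧ wy ≤ 1) ∨ (cy = 0 ∧ wy = 0))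
    (hz : (cz = 1 ∧ 0 ≤ wz ∧ wz ≤ 1) ∨ (cz = 0 ∧ wz = 0)) :
    0 ≤ -2 * wy * wz - wy * wz ^ 3 + 2 * wy ^ 2 * wz ^ 2 + wy ^ 2 * cz - wy ^ 3 * wz + cy * wz ^ 2 - 2 * wx * wz - wx * wz ^ 3 - 2 * wx * wy - 6 * wx * wy * wz + 2 * wx * wy * cz + wx * wy ^ 2 * cz - wx * wy ^ 3 + 2 * wx * cy * wz + wx * cy * wz ^ 2 + 2 * wx ^ 2 * wz ^ 2 + wx ^ 2 * cz + wx ^ 2 * wy * cz + 2 * wx ^ 2 * wy ^ 2 + wx ^ 2 * cy + wx ^ 2 * cy * wz - 2 * wx ^ 2 * cy * cz - wx ^ 3 * wz - wx ^ 3 * wy + cx * wz ^ 2 + 2 * cx * wy * wz + cx * wy * wz ^ 2 + cx * wy ^ 2 + cx * wy ^ 2 * wz - 2 * cx * wy ^ 2 * cz - 2 * cx * cy * wz ^ 2 := by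
  rcases hx with ⟨rfl, hx0, hx1⟩ | ⟨rfl, rfl⟩ <;>
    rcases hy with ⟨rfl, hy0, hy1⟩ | ⟨rfl, rfl⟩ <;>
      rcases hz with ⟨rfl, hz0, hz1⟩ | ⟨rfl, rfl⟩
  · nlinarith [stmt13_lemG wx wy wz hx0 hx1 hy0 hy1 hz0 hz1]
  · nlinarith [stmt13_lemK2 wx wy hx0 hx1 hy0 hy1]
  · nlinarith [stmt13_lemK2 wx wz hx0 hx1 hz0 hz1]
  · norm_num
  · nlinarith [stmt13_lemK2 wy wz hy0 hy1 hz0 hz1]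
  · norm_num
  · norm_num
  · norm_num

theorem stmt13_aux {Ω : Type*} [MeasurableSpace Ω] (P : Measure Ω) [IsProbabilityMeasure P]
    (c w : Ω → ℝ) (hc : Measurable c) (hw : Measurable w)
    (hG : ∀ᵐ ω ∂P, (c ω = 1 ∧ 0 ≤ w ω ∧ w ω ≤ 1) ∨ (c ω = 0 ∧ w ω = 0))
    (Q M1 M2 M3 : ℝ) (hQ : ∫ ω, c ω ∂P = Q) (hM1 : ∫ ω, w ω ∂P = M1)
    (hM2 : ∫ ω, w ω ^ 2 ∂P = M2) (hM3 : ∫ ω, w ω ^ 3 ∂P = M3) :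
    0 ≤ Q * M2 - Q ^ 2 * M2 + Q * M1 * M2 - M1 * M3 - M1 ^ 2 + Q * M1 ^ 2 - M1 ^ 3 + M2 ^ 2 := by
  have hbc : ∀ᵐ ω ∂P, ‖c ω‖ ≤ 1 := by
    filter_upwards [hG] with ω hω
    rcases hω with ⟨e, _, _⟩ | ⟨e, _⟩ <;> rw [e] <;> norm_num
  have hbw : ∀ᵐ ω ∂P, 0 ≤ w ω ∧ w ω ≤ 1 := by
    filter_upwards [hG] with ω hω
    rcases hω with ⟨_, h0, h1⟩ | ⟨_, e⟩
    · exact ⟨h0, h1⟩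
    · rw [e]; norm_num
  have hIc : Integrable c P :=
    (integrable_const (1 : ℝ)).mono' hc.aestronglyMeasurable hbc
  have hIw : Integrable w P := by
    refine (integrable_const (1 : ℝ)).mono' hw.aestronglyMeasurable ?_
    filter_upwards [hbw] with ω hω
    rw [Real.norm_eq_abs, abs_le]; exact ⟨by linarith [hω.1], hω.2⟩
  have hIw2 : Integrable (fun ω => w ω ^ 2) P := by
    refine (integrable_const (1 : ℝ)).mono' (hw.pow_const 2).aestronglyMeasurable ?_
    filter_upwards [hbw] with ω hω
    rw [Real.norm_eq_abs, abs_le]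
    constructor <;> nlinarith [hω.1, hω.2, mul_nonneg hω.1 hω.1, mul_nonneg (mul_nonneg hω.1 hω.1) hω.1]
  have hIw3 : Integrable (fun ω => w ω ^ 3) P := by
    refine (integrable_const (1 : ℝ)).mono' (hw.pow_const 3).aestronglyMeasurable ?_
    filter_upwards [hbw] with ω hω
    rw [Real.norm_eq_abs, abs_le]
    constructor <;> nlinarith [hω.1, hω.2, mul_nonneg hω.1 hω.1, mul_nonneg (mul_nonneg hω.1 hω.1) hω.1]
  have int_basis : ∀ k0 k1 k2 k3 k4 : ℝ,
      (∫ ω, (k0 + k1 * c ω + k2 * w ω + k3 * w ω ^ 2 + k4 * w ω ^ 3) ∂P)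
        = k0 + k1 * Q + k2 * M1 + k3 * M2 + k4 * M3 := by
    intro k0 k1 k2 k3 k4
    have i0 : Integrable (fun ω => k0 + k1 * c ω) P :=
      (integrable_const k0).add (hIc.const_mul k1)
    have i1 : Integrable (fun ω => k0 + k1 * c ω + k2 * w ω) P := i0.add (hIw.const_mul k2)
    have i2 : Integrable (fun ω => k0 + k1 * c ω + k2 * w ω + k3 * w ω ^ 2) P :=
      i1.add (hIw2.const_mul k3)
    rw [integral_add i2 (hIw3.const_mul k4), integral_add i1 (hIw2.const_mul k3),
      integral_add i0 (hIw.const_mul k2),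
      integral_add (integrable_const k0) (hIc.const_mul k1),
      integral_const_mul, integral_const_mul, integral_const_mul, integral_const_mul,
      integral_const, hQ, hM1, hM2, hM3]
    simp [measure_univ]
  have L1 : ∀ y z : Ω,
      (∫ x, ((-2 * w y * w z - w y * w z ^ 3 + 2 * w y ^ 2 * w z ^ 2 + w y ^ 2 * c z - w y ^ 3 * w z + c y * w z ^ 2) + (w z ^ 2 + 2 * w y * w z + w y * w z ^ 2 + w y ^ 2 + w y ^ 2 * w z - 2 * w y ^ 2 * c z - 2 * c y * w z ^ 2) * c x + (-2 * w z - w z ^ 3 - 2 * w y - 6 * w y * w z + 2 * w y * c z + w y ^ 2 * c z - w y ^ 3 + 2 * c y * w z + c y * w z ^ 2) * w x + (2 * w z ^ 2 + c z + w y * c z + 2 * w y ^ 2 + c y + c y * w z - 2 * c y * c z) * w x ^ 2 + (-w z - w y) * w x ^ 3) ∂P) = (-2 * w y * w z - w y * w z ^ 3 + 2 * w y ^ 2 * w z ^ 2 + w y ^ 2 * c z - w y ^ 3 * w z + c y * w z ^ 2) + (w z ^ 2 + 2 * w y * w z + w y * w z ^ 2 + w y ^ 2 + w y ^ 2 * w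 z - 2 * w y ^ 2 * c z - 2 * c y * w z ^ 2) * Q + (-2 * w z - w z ^ 3 - 2 * w y - 6 * w y * w z + 2 * w y * c z + w y ^ 2 * c z - w y ^ 3 + 2 * c y * w z + c y * w z ^ 2) * M1 + (2 * w z ^ 2 + c z + w y * c z + 2 * w y ^ 2 + c y + c y * w z - 2 * c y * c z) * M2 + (-w z - w y) * M3 :=
    fun y z => int_basis _ _ _ _ _
  have N1 : ∀ y z : Ω, ((c y = 1 ∧ 0 ≤ w y ∧ w y ≤ 1) ∨ (c y = 0 ∧ w y = 0)) → ((c z = 1 ∧ 0 ≤ w z ∧ w z ≤ 1) ∨ (c z = 0 ∧ w z = 0)) →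
      0 ≤ (-2 * w y * w z - w y * w z ^ 3 + 2 * w y ^ 2 * w z ^ 2 + w y ^ 2 * c z - w y ^ 3 * w z + c y * w z ^ 2) + (w z ^ 2 + 2 * w y * w z + w y * w z ^ 2 + w y ^ 2 + w y ^ 2 * w z - 2 * w y ^ 2 * c z - 2 * c y * w z ^ 2) * Q + (-2 * w z - w z ^ 3 - 2 * w y - 6 * w y * w z + 2 * w y * c z + w y ^ 2 * c z - w y ^ 3 + 2 * c y * w z + c y * w z ^ 2) * M1 + (2 * w z ^ 2 + c z + w y * c z + 2 * w y ^ 2 + c y + c y * w z - 2 * c y * c z) * M2 + (-w z - w y) * M3 := by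
    intro y z hy hz
    rw [← L1 y z]
    refine integral_nonneg_of_ae ?_
    filter_upwards [hG] with x hx
    simp only [Pi.zero_apply]
    nlinarith [stmt13_lemT (c x) (w x) (c y) (w y) (c z) (w z) hx hy hz]
  have L2 : ∀ z : Ω,
      (∫ y, ((-2 * w y * w z - w y * w z ^ 3 + 2 * w y ^ 2 * w z ^ 2 + w y ^ 2 * c z - w y ^ 3 * w z + c y * w z ^ 2) + (w z ^ 2 + 2 * w y * w z + w y * w z ^ 2 + w y ^ 2 + w y ^ 2 * w z - 2 * w y ^ 2 * c z - 2 * c y * w z ^ 2) * Q + (-2 * w z - w z ^ 3 - 2 * w y - 6 * w y * w z + 2 * w y * c z + w y ^ 2 * c z - w y ^ 3 + 2 * c y * w z + c y * w z ^ 2) * M1 + (2 * w z ^ 2 + c z + w y * c z + 2 * w y ^ 2 + c y + c y * w z - 2 * c y * c z) * M2 + (-w z - w y) * M3) ∂P) = (-2 * M1 * w z - M3 * w z + Q * w z ^ 2 + 2 * M2 * w z ^ 2 - M1 * w z ^ 3 + M2 * c z) + (M2 + 2 * M1 * w z + M2 * w z + w z ^ 2 - 2 * Q * w z ^ 2 +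 M1 * w z ^ 2 - 2 * M2 * c z) * Q + (-2 * M1 - M3 - 2 * w z + 2 * Q * w z - 6 * M1 * w z + Q * w z ^ 2 - w z ^ 3 + 2 * M1 * c z + M2 * c z) * M1 + (Q + 2 * M2 + Q * w z + 2 * w z ^ 2 + c z - 2 * Q * c z + M1 * c z) * M2 + (-M1 - w z) * M3 := by
    intro z
    rw [show (fun y => (-2 * w y * w z - w y * w z ^ 3 + 2 * w y ^ 2 * w z ^ 2 + w y ^ 2 * c z - w y ^ 3 * w z + c y * w z ^ 2) + (w z ^ 2 + 2 * w y * w z + w y * w z ^ 2 + w y ^ 2 + w y ^ 2 * w z - 2 * w y ^ 2 * c z - 2 * c y * w z ^ 2) * Q + (-2 * w z - w z ^ 3 - 2 * w y - 6 * w y * w z + 2 * w y * c z + w y ^ 2 * c z - w y ^ 3 + 2 * c y * w z + c y * w z ^ 2) * M1 + (2 * w z ^ 2 + c z + w y * c z + 2 * w y ^ 2 + c y + c y * w z - 2 * c y * c z) * M2 + (-w z - w y) * M3)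
        = (fun y => (-2 * M1 * w z - M3 * w z + Q * w z ^ 2 + 2 * M2 * w z ^ 2 - M1 * w z ^ 3 + M2 * c z) + (M2 + 2 * M1 * w z + M2 * w z + w z ^ 2 - 2 * Q * w z ^ 2 + M1 * w z ^ 2 - 2 * M2 * c z) * c y + (-2 * M1 - M3 - 2 * w z + 2 * Q * w z - 6 * M1 * w z + Q * w z ^ 2 - w z ^ 3 + 2 * M1 * c z + M2 * c z) * w y + (Q + 2 * M2 + Q * w z + 2 * w z ^ 2 + c z - 2 * Q * c z + M1 * c z) * w y ^ 2 + (-M1 - w z) * w y ^ 3) from funext fun y => by ring]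
    exact int_basis _ _ _ _ _
  have N2 : ∀ z : Ω, ((c z = 1 ∧ 0 ≤ w z ∧ w z ≤ 1) ∨ (c z = 0 ∧ w z = 0)) → 0 ≤ (-2 * M1 * w z - M3 * w z + Q * w z ^ 2 + 2 * M2 * w z ^ 2 - M1 * w z ^ 3 + M2 * c z) + (M2 + 2 * M1 * w z + M2 * w z + w z ^ 2 - 2 * Q * w z ^ 2 + M1 * w z ^ 2 - 2 * M2 * c z) * Q + (-2 * M1 - M3 - 2 * w z + 2 * Q * w z - 6 * M1 * w z + Q * w z ^ 2 - w z ^ 3 + 2 * M1 * c z + M2 * c z) * M1 + (Q + 2 * M2 + Q * w z + 2 * w z ^ 2 + c z - 2 * Q * c z + M1 * c z) * M2 + (-M1 - w z) * M3 := by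
    intro z hz
    rw [← L2 z]
    refine integral_nonneg_of_ae ?_
    filter_upwards [hG] with y hy
    simp only [Pi.zero_apply]
    exact N1 y z hy hz
  have L3 : (∫ z, ((-2 * M1 * w z - M3 * w z + Q * w z ^ 2 + 2 * M2 * w z ^ 2 - M1 * w z ^ 3 + M2 * c z) + (M2 + 2 * M1 * w z + M2 * w z + w z ^ 2 - 2 * Q * w z ^ 2 + M1 * w z ^ 2 - 2 * M2 * c z) * Q + (-2 * M1 - M3 - 2 * w z + 2 * Q * w z - 6 * M1 * w z + Q * w z ^ 2 - w z ^ 3 + 2 * M1 * c z + M2 * c z) * M1 + (Q + 2 * M2 + Q * w z + 2 * w z ^ 2 + c z - 2 * Q * c z + M1 * c z) * M2 + (-M1 - w z) * M3) ∂P) = (Q * M2 - 2 * M1 * M1 - M1 * M3 + M2 * Q + 2 * M2 * M2 - M3 * M1) + (M2 - 2 * Q * M2 + 2 * M1 * M1 + M1 * M2 + M2 - 2 * M2 * Q + M2 * M1) * Q + (-2 * M1 - M3 + 2 * Q * M1 + Q * M2 - 2 * M1 + 2 * M1 * Q - 6 * M1 * M1 + M2 * Q - M3) * M1 + (Q + 2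 * M2 + Q - 2 * Q * Q + Q * M1 + M1 * Q + 2 * M2) * M2 + (-M1 - M1) * M3 := by
    rw [show (fun z => (-2 * M1 * w z - M3 * w z + Q * w z ^ 2 + 2 * M2 * w z ^ 2 - M1 * w z ^ 3 + M2 * c z) + (M2 + 2 * M1 * w z + M2 * w z + w z ^ 2 - 2 * Q * w z ^ 2 + M1 * w z ^ 2 - 2 * M2 * c z) * Q + (-2 * M1 - M3 - 2 * w z + 2 * Q * w z - 6 * M1 * w z + Q * w z ^ 2 - w z ^ 3 + 2 * M1 * c z + M2 * c z) * M1 + (Q + 2 * M2 + Q * w z + 2 * w z ^ 2 + c z - 2 * Q * c z + M1 * c z) * M2 + (-M1 - w z) * M3)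
        = (fun z => (Q * M2 - 2 * M1 * M1 - M1 * M3 + M2 * Q + 2 * M2 * M2 - M3 * M1) + (M2 - 2 * Q * M2 + 2 * M1 * M1 + M1 * M2 + M2 - 2 * M2 * Q + M2 * M1) * c z + (-2 * M1 - M3 + 2 * Q * M1 + Q * M2 - 2 * M1 + 2 * M1 * Q - 6 * M1 * M1 + M2 * Q - M3) * w z + (Q + 2 * M2 + Q - 2 * Q * Q + Q * M1 + M1 * Q + 2 * M2) * w z ^ 2 + (-M1 - M1) * w z ^ 3) from funext fun z => by ring]
    exact int_basis _ _ _ _ _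
  have N3 : 0 ≤ (Q * M2 - 2 * M1 * M1 - M1 * M3 + M2 * Q + 2 * M2 * M2 - M3 * M1) + (M2 - 2 * Q * M2 + 2 * M1 * M1 + M1 * M2 + M2 - 2 * M2 * Q + M2 * M1) * Q + (-2 * M1 - M3 + 2 * Q * M1 + Q * M2 - 2 * M1 + 2 * M1 * Q - 6 * M1 * M1 + M2 * Q - M3) * M1 + (Q + 2 * M2 + Q - 2 * Q * Q + Q * M1 + M1 * Q + 2 * M2) * M2 + (-M1 - M1) * M3 := by
    rw [← L3]
    refine integral_nonneg_of_ae ?_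
    filter_upwards [hG] with z hz
    simp only [Pi.zero_apply]
    exact N2 z hz
  nlinarith [N3]

/-- Let `γ > 0` and let `U ∈ [0,1]` a.s. with either `γ ≥ 1` or
`P(U = 1) ≥ 1 - γ`. With `β_j = E[U^j]`,
`(β₂-(1-γ))(β₂-β₁²) + (β₁-(1-γ))(β₂-β₁²-β₃+β₁β₂) ≥ 0`. -/
theorem stmt_13 {Ω : Type*} [MeasurableSpace Ω] (P : Measure Ω) [IsProbabilityMeasure P]
    (γ : ℝ) (hγ : 0 < γ)
    (U : Ω → ℝ) (hU : Measurable U) (hb : ∀ᵐ ω ∂P, U ω ∈ Set.Icc (0 : ℝ) 1)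
    (hcase : 1 ≤ γ ∨ ENNReal.ofReal (1 - γ) ≤ P {ω | U ω = 1})
    (β₁ β₂ β₃ : ℝ)
    (h1 : β₁ = ∫ ω, U ω ∂P) (h2 : β₂ = ∫ ω, (U ω) ^ 2 ∂P)
    (h3 : β₃ = ∫ ω, (U ω) ^ 3 ∂P) :
    0 ≤ (β₂ - (1 - γ)) * (β₂ - β₁ ^ 2) +
        (β₁ - (1 - γ)) * (β₂ - β₁ ^ 2 - β₃ + β₁ * β₂) := by
  have hS : MeasurableSet {ω | U ω = 1} := hU (measurableSet_singleton 1)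
  set p : ℝ := (P {ω | U ω = 1}).toReal with hpdef
  have hp0 : 0 ≤ p := ENNReal.toReal_nonneg
  have hpa : 1 - γ ≤ p := by
    rcases hcase with h | h
    · linarith
    · rcases le_or_gt (1 - γ) 0 with h' | h'
      · linarith
      · have := ENNReal.toReal_mono (measure_ne_top P _) h
        rwa [ENNReal.toReal_ofReal h'.le] at this
  -- integrability of U powers
  have hIU1 : Integrable U P := by
    refine (integrable_const (1 : ℝ)).mono' hU.aestronglyMeasurable ?_
    filter_upwards [hb] with ω hω
    rw [Real.norm_eq_abs, abs_le]; exact ⟨by linarith [hω.1], hω.2⟩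
  have hIU2 : Integrable (fun ω => U ω ^ 2) P := by
    refine (integrable_const (1 : ℝ)).mono' (hU.pow_const 2).aestronglyMeasurable ?_
    filter_upwards [hb] with ω hω
    rw [Real.norm_eq_abs, abs_le]
    constructor <;> nlinarith [hω.1, hω.2, mul_nonneg hω.1 hω.1, mul_nonneg (mul_nonneg hω.1 hω.1) hω.1]
  have hIU3 : Integrable (fun ω => U ω ^ 3) P := by
    refine (integrable_const (1 : ℝ)).mono' (hU.pow_const 3).aestronglyMeasurable ?_
    filter_upwards [hb] with ω hω
    rw [Real.norm_eq_abs, abs_le]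
    constructor <;> nlinarith [hω.1, hω.2, mul_nonneg hω.1 hω.1, mul_nonneg (mul_nonneg hω.1 hω.1) hω.1]
  have hIind : Integrable ({ω | U ω = 1}.indicator fun _ => (1 : ℝ)) P :=
    (integrable_const (1 : ℝ)).indicator hS
  have hp1 : (∫ ω, {ω | U ω = 1}.indicator (fun _ => (1 : ℝ)) ω ∂P) = p := by
    rw [integral_indicator_const (1 : ℝ) hS, smul_eq_mul, mul_one]
    rfl
  -- basis integral lemma for U
  have int_basisU : ∀ k0 k1 k2 k3 : ℝ,
      (∫ ω, (k0 + k1 * U ω + k2 * U ω ^ 2 + k3 * U ω ^ 3) ∂P)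
        = k0 + k1 * β₁ + k2 * β₂ + k3 * β₃ := by
    intro k0 k1 k2 k3
    have i0 : Integrable (fun ω => k0 + k1 * U ω) P :=
      (integrable_const k0).add (hIU1.const_mul k1)
    have i1 : Integrable (fun ω => k0 + k1 * U ω + k2 * U ω ^ 2) P :=
      i0.add (hIU2.const_mul k2)
    rw [integral_add i1 (hIU3.const_mul k3), integral_add i0 (hIU2.const_mul k2),
      integral_add (integrable_const k0) (hIU1.const_mul k1),
      integral_const_mul, integral_const_mul, integral_const_mul, integral_const,
      ← h1, ← h2, ← h3]
    simp [measure_univ]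
  -- variance fact
  have hb2 : β₁ ^ 2 ≤ β₂ := by
    have hquad : ∀ t : ℝ, 0 ≤ 1 * (t * t) + (-2 * β₁) * t + β₂ := by
      intro t
      have h0 : 0 ≤ ∫ ω, (U ω - t) ^ 2 ∂P := integral_nonneg fun ω => sq_nonneg _
      rw [show (fun ω => (U ω - t) ^ 2)
          = (fun ω => t ^ 2 + (-2 * t) * U ω + 1 * U ω ^ 2 + 0 * U ω ^ 3)
            from funext fun ω => by ring, int_basisU] at h0
      nlinarith [h0]
    have hd := discrim_le_zero hquad
    rw [discrim] at hd
    nlinarith [hd]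
  -- the C-factor
  have hC : 0 ≤ 2 * β₂ - 2 * β₁ ^ 2 + β₁ * β₂ - β₃ := by
    have h0 : 0 ≤ ∫ ω, (1 - U ω) * ((U ω - β₁) ^ 2 + (β₂ - β₁ ^ 2)) ∂P := by
      refine integral_nonneg_of_ae ?_
      filter_upwards [hb] with ω hω
      have : 0 ≤ (U ω - β₁) ^ 2 + (β₂ - β₁ ^ 2) := by nlinarith [sq_nonneg (U ω - β₁)]
      exact mul_nonneg (by linarith [hω.2]) this
    rw [show (fun ω => (1 - U ω) * ((U ω - β₁) ^ 2 + (β₂ - β₁ ^ 2)))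
        = (fun ω => β₂ + (-2 * β₁ - β₂) * U ω + (1 + 2 * β₁) * U ω ^ 2 + (-1) * U ω ^ 3)
          from funext fun ω => by ring, int_basisU] at h0
    nlinarith [h0]
  -- set up χ and W and apply the aux theorem
  have hGood : ∀ᵐ ω ∂P,
      ((fun ω => if U ω = 1 then (0 : ℝ) else 1) ω = 1 ∧
        0 ≤ (fun ω => if U ω = 1 then (0 : ℝ) else U ω) ω ∧
        (fun ω => if U ω = 1 then (0 : ℝ) else U ω) ω ≤ 1) ∨
      ((fun ω => if U ω = 1 then (0 : ℝ) else 1) ω = 0 ∧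
        (fun ω => if U ω = 1 then (0 : ℝ) else U ω) ω = 0) := by
    filter_upwards [hb] with ω hω
    by_cases h : U ω = 1
    · right; exact ⟨if_pos h, if_pos h⟩
    · left
      exact ⟨if_neg h, by rw [if_neg h]; exact hω.1, by rw [if_neg h]; exact hω.2⟩
  have hc : Measurable (fun ω => if U ω = 1 then (0 : ℝ) else 1) :=
    Measurable.ite hS measurable_const measurable_const
  have hw : Measurable (fun ω => if U ω = 1 then (0 : ℝ) else U ω) :=
    Measurable.ite hS measurable_const hU
  have hQe : (∫ ω, (if U ω = 1 then (0 : ℝ) else 1) ∂P) = 1 - p := by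
    have e : (fun ω => if U ω = 1 then (0 : ℝ) else 1)
        = fun ω => 1 - {ω | U ω = 1}.indicator (fun _ => (1 : ℝ)) ω := by
      funext ω
      by_cases h : U ω = 1 <;>
        simp [Set.indicator_apply, Set.mem_setOf_eq, h]
    rw [e, integral_sub (integrable_const 1) hIind, integral_const, hp1]
    simp [measure_univ]
  have hIw1 : Integrable (fun ω => if U ω = 1 then (0 : ℝ) else U ω) P := by
    refine (integrable_const (1 : ℝ)).mono' hw.aestronglyMeasurable ?_
    filter_upwards [hb] with ω hω
    rw [Real.norm_eq_abs, abs_le]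
    by_cases h : U ω = 1
    · rw [if_pos h]; norm_num
    · rw [if_neg h]; exact ⟨by linarith [hω.1], hω.2⟩
  have hIw2 : Integrable (fun ω => (if U ω = 1 then (0 : ℝ) else U ω) ^ 2) P := by
    refine (integrable_const (1 : ℝ)).mono' (hw.pow_const 2).aestronglyMeasurable ?_
    filter_upwards [hb] with ω hω
    rw [Real.norm_eq_abs, abs_le]
    by_cases h : U ω = 1
    · rw [if_pos h]; norm_num
    · rw [if_neg h]
      constructor <;> nlinarith [hω.1, hω.2, mul_nonneg hω.1 hω.1, mul_nonneg (mul_nonneg hω.1 hω.1) hω.1]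
  have hIw3 : Integrable (fun ω => (if U ω = 1 then (0 : ℝ) else U ω) ^ 3) P := by
    refine (integrable_const (1 : ℝ)).mono' (hw.pow_const 3).aestronglyMeasurable ?_
    filter_upwards [hb] with ω hω
    rw [Real.norm_eq_abs, abs_le]
    by_cases h : U ω = 1
    · rw [if_pos h]; norm_num
    · rw [if_neg h]
      constructor <;> nlinarith [hω.1, hω.2, mul_nonneg hω.1 hω.1, mul_nonneg (mul_nonneg hω.1 hω.1) hω.1]
  have hm1 : (∫ ω, (if U ω = 1 then (0 : ℝ) else U ω) ∂P) = β₁ - p := by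
    have esplit : ∀ ω, U ω
        = {ω | U ω = 1}.indicator (fun _ => (1 : ℝ)) ω + (if U ω = 1 then (0 : ℝ) else U ω) :=
      fun ω => by
        by_cases h : U ω = 1 <;> simp [Set.indicator_apply, Set.mem_setOf_eq, h]
    have e2 : β₁ = p + ∫ ω, (if U ω = 1 then (0 : ℝ) else U ω) ∂P := by
      rw [h1, integral_congr_ae (ae_of_all P esplit), integral_add hIind hIw1, hp1]
    linarith
  have hm2 : (∫ ω, (if U ω = 1 then (0 : ℝ) else U ω) ^ 2 ∂P) = β₂ - p := by
    have esplit : ∀ ω, U ω ^ 2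
        = {ω | U ω = 1}.indicator (fun _ => (1 : ℝ)) ω
          + (if U ω = 1 then (0 : ℝ) else U ω) ^ 2 :=
      fun ω => by
        by_cases h : U ω = 1 <;> simp [Set.indicator_apply, Set.mem_setOf_eq, h]
    have e2 : β₂ = p + ∫ ω, (if U ω = 1 then (0 : ℝ) else U ω) ^ 2 ∂P := by
      rw [h2, integral_congr_ae (ae_of_all P esplit), integral_add hIind hIw2, hp1]
    linarith
  have hm3 : (∫ ω, (if U ω = 1 then (0 : ℝ) else U ω) ^ 3 ∂P) = β₃ - p := by
    have esplit : ∀ ω, U ω ^ 3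
        = {ω | U ω = 1}.indicator (fun _ => (1 : ℝ)) ω
          + (if U ω = 1 then (0 : ℝ) else U ω) ^ 3 :=
      fun ω => by
        by_cases h : U ω = 1 <;> simp [Set.indicator_apply, Set.mem_setOf_eq, h]
    have e2 : β₃ = p + ∫ ω, (if U ω = 1 then (0 : ℝ) else U ω) ^ 3 ∂P := by
      rw [h3, integral_congr_ae (ae_of_all P esplit), integral_add hIind hIw3, hp1]
    linarith
  have hval := stmt13_aux P (fun ω => if U ω = 1 then (0 : ℝ) else 1)
    (fun ω => if U ω = 1 then (0 : ℝ) else U ω) hc hw hGood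
    (1 - p) (β₁ - p) (β₂ - p) (β₃ - p) hQe hm1 hm2 hm3
  nlinarith [hval, hC, mul_nonneg (show (0 : ℝ) ≤ p - (1 - γ) by linarith) hC]
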